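/- Let X₁, …, X_N be real-valued random variables (not necessarily independent) on a common probability space, with cumulative distribution functions F₁, …, F_N, where Fᵢ(x) = P(Xᵢ ≤ x). Fix ε > 0 and call an index i an ε-meaningful detection if N·Fᵢ(Xᵢ) < ε. Then the expected number of ε-meaningful detections is at most ε, i.e. E[#{i ∈ {1,…,N} : N·Fᵢ(Xᵢ) < ε}] ≤ ε. -/

import Mathlib

open MeasureTheory

lemma cdf_false_alarm_core {Ω : Type*} [MeasurableSpace Ω]
    (μ : Measure Ω) [IsFiniteMeasure μ] (X : Ω → ℝ) (hX : Measurable X) (t : ℝ) :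
    μ {ω | μ {ω' | X ω' ≤ X ω} < ENNReal.ofReal t} ≤ ENNReal.ofReal t := by
  set G : ℝ → ENNReal := fun x => μ {ω' | X ω' ≤ x} with hG
  have hGmono : Monotone G := fun a b hab =>
    measure_mono (fun ω (h : X ω ≤ a) => le_trans h hab)
  -- right continuity of G
  have hG_rc : ∀ x : ℝ, G x = ⨅ n : ℕ, G (x + 1 / (n + 1)) := by
    intro x
    have hset : {ω' | X ω' ≤ x} = ⋂ n : ℕ, {ω' | X ω' ≤ x + 1 / (n + 1)} := by
      ext ω
      simp only [Set.mem_iInter, Set.mem_setOf_eq]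
      constructor
      · intro h n
        have : (0:ℝ) < 1 / (n + 1) := by positivity
        linarith
      · intro h
        by_contra hc
        push_neg at hc
        obtain ⟨n, hn⟩ := exists_nat_one_div_lt (sub_pos.mpr hc)
        have := h n
        linarith
    have hmeas : ∀ n : ℕ, MeasurableSet {ω' | X ω' ≤ x + 1 / (n + 1)} := fun n =>
      hX measurableSet_Iic
    have hdir : Directed (· ⊇ ·) (fun n : ℕ => {ω' | X ω' ≤ x + 1 / (n + 1)}) := by
      intro m n
      refine ⟨max m n, ?_, ?_⟩ <;>
      · intro ω hω
        simp only [Set.mem_setOf_eq] at hω ⊢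
        have h1 : (1:ℝ) / (max m n + 1) ≤ 1 / (m + 1) := by
          apply one_div_le_one_div_of_le (by positivity)
          have := le_max_left (m:ℝ) n
          push_cast
          simp [le_max_left, le_max_right, add_le_add_iff_right]
        have h2 : (1:ℝ) / (max m n + 1) ≤ 1 / (n + 1) := by
          apply one_div_le_one_div_of_le (by positivity)
          push_cast
          simp [le_max_left, le_max_right, add_le_add_iff_right]
        first
          | linarith
          | linarith
    show μ {ω' | X ω' ≤ x} = ⨅ n : ℕ, μ {ω' | X ω' ≤ x + 1 / (n + 1)}
    rw [hset, Directed.measure_iInter (fun n => (hmeas n).nullMeasurableSet) hdir ⟨0, measure_ne_top μ _⟩]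
  -- cover the event by countably many sublevel events
  have hsub : {ω | G (X ω) < ENNReal.ofReal t} ⊆
      ⋃ q : {q : ℚ // G (q : ℝ) < ENNReal.ofReal t}, {ω | X ω ≤ (q : ℝ)} := by
    intro ω hω
    simp only [Set.mem_setOf_eq] at hω
    rw [hG_rc (X ω)] at hω
    rw [iInf_lt_iff] at hω
    obtain ⟨n, hn⟩ := hω
    have hlt : X ω < X ω + 1 / (n + 1) := by
      have : (0:ℝ) < 1 / (n + 1) := by positivity
      linarith
    obtain ⟨q, hq1, hq2⟩ := exists_rat_btwn hlt
    have hGq : G (q : ℝ) < ENNReal.ofReal t := lt_of_le_of_lt (hGmono hq2.le) hn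
    exact Set.mem_iUnion.mpr ⟨⟨q, hGq⟩, hq1.le⟩
  calc μ {ω | μ {ω' | X ω' ≤ X ω} < ENNReal.ofReal t}
      ≤ μ (⋃ q : {q : ℚ // G (q : ℝ) < ENNReal.ofReal t}, {ω | X ω ≤ (q : ℝ)}) :=
        measure_mono hsub
    _ ≤ ENNReal.ofReal t := by
        rw [Directed.measure_iUnion]
        · exact iSup_le fun q => q.2.le
        · intro q r
          rcases le_total (q : ℚ) r with h | h
          · refine ⟨r, fun ω hω => ?_, fun ω hω => hω⟩
            simp only [Set.mem_setOf_eq] at hω ⊢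
            exact le_trans hω (by exact_mod_cast h)
          · refine ⟨q, fun ω hω => hω, fun ω hω => ?_⟩
            simp only [Set.mem_setOf_eq] at hω ⊢
            exact le_trans hω (by exact_mod_cast h)

/-- Let `X 0, …, X (N-1)` be real-valued random variables (not necessarily independent)
on a common probability space, with cumulative distribution functions
`F i x = P(X i ≤ x)`. Fix `ε > 0` and call an index `i` an ε-meaningful detection if
`N * F i (X i) < ε`. Then the expected number of ε-meaningful detections is at most `ε`. -/
theorem expected_number_of_false_alarms_le {Ω : Type*} [MeasurableSpace Ω]
    (μ : Measure Ω) [IsProbabilityMeasure μ]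
    (N : ℕ) (X : Fin N → Ω → ℝ) (hX : ∀ i, Measurable (X i))
    (F : Fin N → ℝ → ℝ) (hF : ∀ i x, F i x = (μ {ω | X i ω ≤ x}).toReal)
    (ε : ℝ) (hε : 0 < ε) :
    ∫ ω, (Nat.card {i : Fin N // (N : ℝ) * F i (X i ω) < ε} : ℝ) ∂μ ≤ ε := by
  classical
  rcases Nat.eq_zero_or_pos N with hN | hN
  · subst hN
    simp
    exact hε.le
  have hNpos : (0:ℝ) < N := by exact_mod_cast hN
  -- sets of false alarms
  set A : Fin N → Set Ω := fun i => {ω | (N : ℝ) * F i (X i ω) < ε} with hA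
  have hFmono : ∀ i, Monotone (F i) := by
    intro i a b hab
    rw [hF, hF]
    exact ENNReal.toReal_mono (measure_ne_top μ _)
      (measure_mono fun ω (h : X i ω ≤ a) => le_trans h hab)
  have hAmeas : ∀ i, MeasurableSet (A i) := by
    intro i
    have h1 : Measurable (fun ω => (N : ℝ) * F i (X i ω)) :=
      (measurable_const.mul ((hFmono i).measurable)).comp (hX i)
    exact h1 measurableSet_Iio
  -- pointwise count as sum of indicators
  have hcount : ∀ ω, ((Nat.card {i : Fin N // (N : ℝ) * F i (X i ω) < ε}) : ℝ)
      = ∑ i : Fin N, (A i).indicator (fun _ => (1:ℝ)) ω := by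
    intro ω
    rw [Nat.card_eq_fintype_card, Fintype.card_subtype, Finset.card_filter]
    push_cast
    refine Finset.sum_congr rfl fun i _ => ?_
    simp [Set.indicator_apply, hA]
  -- measure bound for each A i
  have hbound : ∀ i, (μ (A i)).toReal ≤ ε / N := by
    intro i
    have hAi : A i = {ω | μ {ω' | X i ω' ≤ X i ω} < ENNReal.ofReal (ε / N)} := by
      ext ω
      simp only [hA, Set.mem_setOf_eq, hF]
      rw [mul_comm, ← lt_div_iff₀ hNpos,
        ENNReal.lt_ofReal_iff_toReal_lt (measure_ne_top μ _)]
    rw [hAi]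
    exact ENNReal.toReal_le_of_le_ofReal (by positivity)
      (cdf_false_alarm_core μ (X i) (hX i) (ε / N))
  calc ∫ ω, ((Nat.card {i : Fin N // (N : ℝ) * F i (X i ω) < ε}) : ℝ) ∂μ
      = ∫ ω, ∑ i : Fin N, (A i).indicator (fun _ => (1:ℝ)) ω ∂μ := by
        exact integral_congr_ae (Filter.Eventually.of_forall hcount)
    _ = ∑ i : Fin N, ∫ ω, (A i).indicator (fun _ => (1:ℝ)) ω ∂μ := by
        exact integral_finset_sum _ fun i _ =>
          (integrable_const (1:ℝ)).indicator (hAmeas i)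
    _ = ∑ i : Fin N, (μ (A i)).toReal := by
        refine Finset.sum_congr rfl fun i _ => ?_
        rw [integral_indicator_const (1:ℝ) (hAmeas i)]
        simp
        rfl
    _ ≤ ∑ _i : Fin N, ε / N := Finset.sum_le_sum fun i _ => hbound i
    _ = ε := by
        rw [Finset.sum_const, Finset.card_univ, Fintype.card_fin, nsmul_eq_mul]
        field_simp
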